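/- Two independent queries to the compressed oracle commute exactly: on ℂ^{X×Y×X'×Y'×D̄} with X' = X and Y' = Y being disjoint copies of the query registers, the unitary O_{XYD} acting on the first, second, and fifth registers commutes with the unitary O_{X'Y'D} acting on the third, fourth, and fifth registers; i.e., their commutator is the zero operator. -/

import Mathlib

open scoped Matrix Kronecker

noncomputable section

/-- The ℓ²→ℓ² operator norm of a square complex matrix. -/
def opNorm {I : Type*} [Fintype I] [DecidableEq I] (A : Matrix I I ℂ) : ℝ :=
  ‖Matrix.toEuclideanCLM (𝕜 := ℂ) A‖

/-- The commutator [A,B] = AB - BA. -/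
def commM {I : Type*} [Fintype I] (A B : Matrix I I ℂ) : Matrix I I ℂ := A * B - B * A

/-- Euclidean norm of a vector in ℂ^I. -/
def vnorm {I : Type*} [Fintype I] (v : I → ℂ) : ℝ := Real.sqrt (∑ i, ‖v i‖ ^ 2)

/-- Y = {0,1}^n. -/
abbrev Yb (n : ℕ) := Fin n → Bool
/-- Ȳ = Y ∪ {⊥}. -/
abbrev Ybar (n : ℕ) := Option (Yb n)

/-- standard basis vector |a⟩. -/
def ket {n : ℕ} (a : Ybar n) : Ybar n → ℂ := fun b => if b = a then 1 else 0

/-- (-1)^{η⋅y}. -/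
def signDot {n : ℕ} (η y : Yb n) : ℂ := (-1 : ℂ) ^ (Finset.univ.filter fun i => η i && y i).card

/-- 2^{-n/2}. -/
def cst (n : ℕ) : ℝ := (2 : ℝ) ^ (-(n : ℝ) / 2)

/-- |φ_η⟩ = 2^{-n/2} ∑_y (-1)^{η⋅y} |y⟩. -/
def phi {n : ℕ} (η : Yb n) : Ybar n → ℂ :=
  fun a => Option.casesOn a 0 fun y => (cst n : ℂ) * signDot η y

/-- |φ_0⟩. -/
def phi0 (n : ℕ) : Ybar n → ℂ := phi fun _ => false

/-- The Walsh–Hadamard transform on ℂ^Y, extended by the identity on |⊥⟩. -/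
def Hbar (n : ℕ) : Matrix (Ybar n) (Ybar n) ℂ :=
  Matrix.of fun a b =>
    match a, b with
    | none, none => 1
    | some y, some y' => (cst n : ℂ) * signDot y y'
    | _, _ => 0

/-- The involution exchanging ⊥ and 0^n. -/
def swapBot (n : ℕ) : Ybar n → Ybar n :=
  fun a =>
    Option.casesOn a (some fun _ => false) fun y =>
      if y = (fun _ => false) then none else some y

/-- The permutation matrix exchanging |⊥⟩ and |0^n⟩. -/
def Sswap (n : ℕ) : Matrix (Ybar n) (Ybar n) ℂ :=
  Matrix.of fun a b => if a = swapBot n b then 1 else 0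

/-- F = H̄ ⬝ S ⬝ H̄. -/
def Fmat (n : ℕ) : Matrix (Ybar n) (Ybar n) ℂ := Hbar n * Sswap n * Hbar n

/-- Γ_x = |{y : (x,y) ∈ R}|. -/
def Gam {n : ℕ} {X : Type*} [Fintype X] (R : X → Yb n → Prop) [∀ x, DecidablePred (R x)]
    (x : X) : ℕ :=
  (Finset.univ.filter fun y => R x y).card

/-- Γ_R = max_x Γ_x. -/
def GamR {n : ℕ} {X : Type*} [Fintype X] (R : X → Yb n → Prop) [∀ x, DecidablePred (R x)] : ℕ :=
  Finset.univ.sup fun x => Gam R x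

/-- whether an entry a ∈ Ȳ satisfies the relation at x (⊥ never does). -/
def hitB {n : ℕ} {X : Type*} (R : X → Yb n → Prop) [∀ x, DecidablePred (R x)] (x : X) :
    Ybar n → Bool :=
  fun a => Option.casesOn a false fun y => decide (R x y)

/-- The projection Π^x = ∑_{y : (x,y)∈R} |y⟩⟨y| on ℂ^Ȳ. -/
def Pix {n : ℕ} {X : Type*} (R : X → Yb n → Prop) [∀ x, DecidablePred (R x)] (x : X) :
    Matrix (Ybar n) (Ybar n) ℂ :=
  Matrix.diagonal fun a => if hitB R x a then 1 else 0

/-- bitwise xor. -/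
def xorY {n : ℕ} (y y' : Yb n) : Yb n := fun i => xor (y i) (y' i)

/-- CNOT on Y × Ȳ (control Ȳ, target Y), acting trivially on |y⟩⊗|⊥⟩. -/
def cnotFun (n : ℕ) : Yb n × Ybar n → Yb n × Ybar n :=
  fun p => Option.casesOn p.2 p fun y' => (xorY p.1 y', p.2)

def CNOTmat (n : ℕ) : Matrix (Yb n × Ybar n) (Yb n × Ybar n) ℂ :=
  Matrix.of fun a b => if a = cnotFun n b then 1 else 0

/-- O^x = (1⊗F)·CNOT·(1⊗F) on ℂ^{Y×Ȳ}. -/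
def Oxsmall (n : ℕ) : Matrix (Yb n × Ybar n) (Yb n × Ybar n) ℂ :=
  ((1 : Matrix (Yb n) (Yb n) ℂ) ⊗ₖ Fmat n) * CNOTmat n *
    ((1 : Matrix (Yb n) (Yb n) ℂ) ⊗ₖ Fmat n)

/-- The database index set D̄ = X → Ȳ. -/
abbrev Db (n : ℕ) (X : Type*) := X → Ybar n

/-- An operator A on ℂ^Ȳ acting on the x-coordinate of ℂ^{D̄}. -/
def onCoord {n : ℕ} {X : Type*} [Fintype X] [DecidableEq X] (x : X)
    (A : Matrix (Ybar n) (Ybar n) ℂ) : Matrix (Db n X) (Db n X) ℂ :=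
  Matrix.of fun d d' => if ∀ x', x' ≠ x → d x' = d' x' then A (d x) (d' x) else 0

/-- Π^x_{D_x} : diagonal projection on ℂ^{D̄} onto databases with (x, d x) ∈ R. -/
def PiDx {n : ℕ} {X : Type*} [Fintype X] [DecidableEq X]
    (R : X → Yb n → Prop) [∀ x, DecidablePred (R x)] (x : X) :
    Matrix (Db n X) (Db n X) ℂ :=
  Matrix.diagonal fun d => if hitB R x (d x) then 1 else 0

/-- Π^∅_D : diagonal projection on ℂ^{D̄} onto databases hitting R nowhere. -/
def PiEmptyD {n : ℕ} {X : Type*} [Fintype X] [DecidableEq X]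
    (R : X → Yb n → Prop) [∀ x, DecidablePred (R x)] :
    Matrix (Db n X) (Db n X) ℂ :=
  Matrix.diagonal fun d => if ∀ x, hitB R x (d x) = false then 1 else 0

/-- CNOT_{YD_x}. -/
def cnotDFun {n : ℕ} {X : Type*} (x : X) : Yb n × Db n X → Yb n × Db n X :=
  fun p => Option.casesOn (p.2 x) p fun yx => (xorY p.1 yx, p.2)

def CNOTD {n : ℕ} {X : Type*} [Fintype X] [DecidableEq X] (x : X) :
    Matrix (Yb n × Db n X) (Yb n × Db n X) ℂ :=
  Matrix.of fun a b => if a = cnotDFun x b then 1 else 0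

/-- F_{D_x}. -/
def FDx (n : ℕ) {X : Type*} [Fintype X] [DecidableEq X] (x : X) :
    Matrix (Db n X) (Db n X) ℂ :=
  onCoord x (Fmat n)

/-- O^x_{YD_x} = F_{D_x}·CNOT_{YD_x}·F_{D_x} on ℂ^{Y×D̄}. -/
def OxD (n : ℕ) {X : Type*} [Fintype X] [DecidableEq X] (x : X) :
    Matrix (Yb n × Db n X) (Yb n × Db n X) ℂ :=
  ((1 : Matrix (Yb n) (Yb n) ℂ) ⊗ₖ FDx n x) * CNOTD x *
    ((1 : Matrix (Yb n) (Yb n) ℂ) ⊗ₖ FDx n x)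

/-- O_{XYD} = ∑_x |x⟩⟨x| ⊗ O^x_{YD_x} on ℂ^{X×Y×D̄}. -/
def OXYD (n : ℕ) (X : Type*) [Fintype X] [DecidableEq X] :
    Matrix (X × Yb n × Db n X) (X × Yb n × Db n X) ℂ :=
  Matrix.of fun p q =>
    if p.1 = q.1 then OxD n p.1 (p.2.1, p.2.2) (q.2.1, q.2.2) else 0

/-- The pointer set P = ZMod (|X|+1). -/
abbrev Ptr (X : Type*) [Fintype X] := ZMod (Fintype.card X + 1)

/-- Encoding of X into the nonzero elements of ZMod (|X|+1). -/
def encodeX {X : Type*} [Fintype X] (x : X) : Ptr X :=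
  (((Fintype.equivFin X x : ℕ) + 1 : ℕ) : Ptr X)

/-- ext(d): the smallest x ∈ X with (x, d x) ∈ R, encoded in ZMod (|X|+1); ∅ ↦ 0. -/
def extD {n : ℕ} {X : Type*} [Fintype X] [LinearOrder X] (R : X → Yb n → Prop)
    [∀ x, DecidablePred (R x)] (d : Db n X) : Ptr X :=
  if h : (Finset.univ.filter fun x => hitB R x (d x) = true).Nonempty then
    encodeX ((Finset.univ.filter fun x => hitB R x (d x) = true).min' h)
  else 0

/-- The purified measurement M_{DP} : |d⟩⊗|w⟩ ↦ |d⟩⊗|w + ext(d)⟩ on ℂ^{D̄×P}. -/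
def MDP {n : ℕ} {X : Type*} [Fintype X] [LinearOrder X] (R : X → Yb n → Prop)
    [∀ x, DecidablePred (R x)] :
    Matrix (Db n X × Ptr X) (Db n X × Ptr X) ℂ :=
  Matrix.of fun p q => if p = (q.1, q.2 + extD R q.1) then 1 else 0

/-- O^x_{YD_x} ⊗ 1_P on ℂ^{Y×D̄×P}. -/
def OxDP (n : ℕ) {X : Type*} [Fintype X] [DecidableEq X] (x : X) :
    Matrix (Yb n × Db n X × Ptr X) (Yb n × Db n X × Ptr X) ℂ :=
  Matrix.of fun p q =>
    if p.2.2 = q.2.2 then OxD n x (p.1, p.2.1) (q.1, q.2.1) else 0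

/-- 1_Y ⊗ M_{DP} on ℂ^{Y×D̄×P}. -/
def MYDP {n : ℕ} {X : Type*} [Fintype X] [LinearOrder X] (R : X → Yb n → Prop)
    [∀ x, DecidablePred (R x)] :
    Matrix (Yb n × Db n X × Ptr X) (Yb n × Db n X × Ptr X) ℂ :=
  Matrix.of fun p q =>
    if p.1 = q.1 then MDP R (p.2.1, p.2.2) (q.2.1, q.2.2) else 0

/-- O_{XYD} ⊗ 1_P on ℂ^{X×Y×D̄×P}. -/
def OXYDP (n : ℕ) (X : Type*) [Fintype X] [DecidableEq X] :
    Matrix (X × Yb n × Db n X × Ptr X) (X × Yb n × Db n X × Ptr X) ℂ :=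
  Matrix.of fun p q =>
    if p.2.2.2 = q.2.2.2 then
      OXYD n X (p.1, p.2.1, p.2.2.1) (q.1, q.2.1, q.2.2.1)
    else 0

/-- 1_{X×Y} ⊗ M_{DP} on ℂ^{X×Y×D̄×P}. -/
def MXYDP {n : ℕ} {X : Type*} [Fintype X] [LinearOrder X] (R : X → Yb n → Prop)
    [∀ x, DecidablePred (R x)] :
    Matrix (X × Yb n × Db n X × Ptr X) (X × Yb n × Db n X × Ptr X) ℂ :=
  Matrix.of fun p q =>
    if p.1 = q.1 ∧ p.2.1 = q.2.1 then
      MDP R (p.2.2.1, p.2.2.2) (q.2.2.1, q.2.2.2)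
    else 0








-- helper instance (Lean struggles to find this by search)
instance instDEq4 (n : ℕ) (X : Type*) [Fintype X] [DecidableEq X] :
    DecidableEq (X × Yb n × Db n X × Ptr X) :=
  instDecidableEqProd


-- extensions to the five-register space W × X × Y × D̄ × P
/-- 1_W ⊗ O_{XYD} ⊗ 1_P on ℂ^{W×X×Y×D̄×P}. -/
def OW (n : ℕ) (W X : Type*) [Fintype X] [DecidableEq X] [DecidableEq W] :
    Matrix (W × X × Yb n × Db n X × Ptr X) (W × X × Yb n × Db n X × Ptr X) ℂ :=
  Matrix.of fun p q =>
    if p.1 = q.1 ∧ p.2.2.2.2 = q.2.2.2.2 then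
      OXYD n X (p.2.1, p.2.2.1, p.2.2.2.1) (q.2.1, q.2.2.1, q.2.2.2.1)
    else 0

/-- 1_{W×X×Y} ⊗ M_{DP} on ℂ^{W×X×Y×D̄×P}. -/
def MW {n : ℕ} (W : Type*) {X : Type*} [Fintype X] [LinearOrder X] [DecidableEq W]
    (R : X → Yb n → Prop) [∀ x, DecidablePred (R x)] :
    Matrix (W × X × Yb n × Db n X × Ptr X) (W × X × Yb n × Db n X × Ptr X) ℂ :=
  Matrix.of fun p q =>
    if p.1 = q.1 ∧ p.2.1 = q.2.1 ∧ p.2.2.1 = q.2.2.1 then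
      MDP R (p.2.2.2.1, p.2.2.2.2) (q.2.2.2.1, q.2.2.2.2)
    else 0

instance instDEq5 (n : ℕ) (W X : Type*) [Fintype X] [DecidableEq X] [DecidableEq W] :
    DecidableEq (W × X × Yb n × Db n X × Ptr X) :=
  instDecidableEqProd


/-- V ⊗ 1_{D̄×P} on ℂ^{W×X×Y×D̄×P}. -/
def Vext (n : ℕ) (W X : Type*) [Fintype X] [DecidableEq X]
    (V : Matrix (W × X × Yb n) (W × X × Yb n) ℂ) :
    Matrix (W × X × Yb n × Db n X × Ptr X) (W × X × Yb n × Db n X × Ptr X) ℂ :=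
  Matrix.of fun p q =>
    if p.2.2.2 = q.2.2.2 then V (p.1, p.2.1, p.2.2.1) (q.1, q.2.1, q.2.2.1) else 0

/-- Ψ = ψ ⊗ |⊥⃗⟩ ⊗ |0⟩. -/
def PsiInit (n : ℕ) {W X : Type*} [Fintype X] [DecidableEq X]
    (ψ : W × X × Yb n → ℂ) : W × X × Yb n × Db n X × Ptr X → ℂ :=
  fun p =>
    if p.2.2.2.1 = (fun _ => (none : Ybar n)) ∧ p.2.2.2.2 = (0 : Ptr X) then
      ψ (p.1, p.2.1, p.2.2.1)
    else 0

/-- 1_{W×X×Y×D̄} ⊗ |0⟩⟨0|_P. -/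
def ProjZeroP (n : ℕ) (W X : Type*) [Fintype X] [DecidableEq X] [DecidableEq W] :
    Matrix (W × X × Yb n × Db n X × Ptr X) (W × X × Yb n × Db n X × Ptr X) ℂ :=
  Matrix.of fun p q =>
    if p.1 = q.1 ∧ p.2.1 = q.2.1 ∧ p.2.2.1 = q.2.2.1 ∧ p.2.2.2.1 = q.2.2.2.1 ∧
        p.2.2.2.2 = (0 : Ptr X) ∧ q.2.2.2.2 = (0 : Ptr X) then 1 else 0



/-- O_{XYD} acting on registers 1, 2 and 5 of ℂ^{X×Y×X'×Y'×D̄}. -/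
def Oquery1 (n : ℕ) (X : Type*) [Fintype X] [DecidableEq X] :
    Matrix (X × Yb n × X × Yb n × Db n X) (X × Yb n × X × Yb n × Db n X) ℂ :=
  Matrix.of fun p q =>
    if p.2.2.1 = q.2.2.1 ∧ p.2.2.2.1 = q.2.2.2.1 then
      OXYD n X (p.1, p.2.1, p.2.2.2.2) (q.1, q.2.1, q.2.2.2.2)
    else 0

/-- O_{X'Y'D} acting on registers 3, 4 and 5 of ℂ^{X×Y×X'×Y'×D̄}. -/
def Oquery2 (n : ℕ) (X : Type*) [Fintype X] [DecidableEq X] :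
    Matrix (X × Yb n × X × Yb n × Db n X) (X × Yb n × X × Yb n × Db n X) ℂ :=
  Matrix.of fun p q =>
    if p.1 = q.1 ∧ p.2.1 = q.2.1 then
      OXYD n X (p.2.2.1, p.2.2.2.1, p.2.2.2.2) (q.2.2.1, q.2.2.2.1, q.2.2.2.2)
    else 0


/-- M^R_{DP} acting on registers D and P of ℂ^{D̄×P×P'}. -/
def Mext1 {n : ℕ} {X : Type*} [Fintype X] [LinearOrder X]
    (R : X → Yb n → Prop) [∀ x, DecidablePred (R x)] :
    Matrix (Db n X × Ptr X × Ptr X) (Db n X × Ptr X × Ptr X) ℂ :=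
  Matrix.of fun p q =>
    if p.2.2 = q.2.2 then MDP R (p.1, p.2.1) (q.1, q.2.1) else 0

/-- M^{R'}_{DP'} acting on registers D and P' of ℂ^{D̄×P×P'}. -/
def Mext2 {n : ℕ} {X : Type*} [Fintype X] [LinearOrder X]
    (R' : X → Yb n → Prop) [∀ x, DecidablePred (R' x)] :
    Matrix (Db n X × Ptr X × Ptr X) (Db n X × Ptr X × Ptr X) ℂ :=
  Matrix.of fun p q =>
    if p.2.1 = q.2.1 then MDP R' (p.1, p.2.2) (q.1, q.2.2) else 0



-- auxiliary development
lemma signDot_eq_prod {n : ℕ} (η y : Yb n) :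
    signDot η y = ∏ i : Fin n, (if η i && y i then (-1 : ℂ) else 1) := by
  rw [signDot, Finset.prod_ite, Finset.prod_const, Finset.prod_const, one_pow, mul_one]

lemma cst_sq (n : ℕ) : (cst n : ℂ) * (cst n : ℂ) * (2 : ℂ) ^ n = 1 := by
  have h : (cst n) * (cst n) * (2:ℝ)^n = 1 := by
    rw [cst, ← Real.rpow_natCast 2 n, ← Real.rpow_add (by norm_num), ← Real.rpow_add (by norm_num)]
    norm_num
  calc (cst n : ℂ) * (cst n : ℂ) * (2 : ℂ) ^ n
      = ((cst n * cst n * (2:ℝ)^n : ℝ) : ℂ) := by push_cast; ring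
    _ = 1 := by rw [h]; norm_num

lemma char_sum {n : ℕ} (y y' : Yb n) :
    ∑ z : Yb n, signDot y z * signDot z y' = if y = y' then (2 : ℂ) ^ n else 0 := by
  have key : ∀ z : Yb n, signDot y z * signDot z y'
      = ∏ i : Fin n, ((if y i && z i then (-1:ℂ) else 1) * (if z i && y' i then (-1:ℂ) else 1)) := by
    intro z
    rw [signDot_eq_prod, signDot_eq_prod, ← Finset.prod_mul_distrib]
  simp only [key]
  have hps := Finset.prod_univ_sum (fun _ : Fin n => (Finset.univ : Finset Bool))
    (fun i b => (if y i && b then (-1:ℂ) else 1) * (if b && y' i then (-1:ℂ) else 1))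
  rw [Fintype.piFinset_univ] at hps
  rw [← hps]
  have coord : ∀ i : Fin n, (∑ b : Bool, (if y i && b then (-1:ℂ) else 1) * (if b && y' i then (-1:ℂ) else 1))
      = if y i = y' i then 2 else 0 := by
    intro i
    cases hy : y i <;> cases hy' : y' i <;> simp [Fintype.sum_bool] <;> norm_num
  simp only [coord]
  by_cases h : y = y'
  · subst h; simp
  · rw [if_neg h]
    obtain ⟨i, hi⟩ : ∃ i, y i ≠ y' i := by
      by_contra hc; push_neg at hc; exact h (funext hc)
    exact Finset.prod_eq_zero (Finset.mem_univ i) (by simp [hi])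

lemma Hbar_sq (n : ℕ) : Hbar n * Hbar n = 1 := by
  ext a b
  rw [Matrix.mul_apply, Fintype.sum_option]
  match a, b with
  | none, none => simp [Hbar, Matrix.one_apply]
  | none, some y' => simp [Hbar, Matrix.one_apply]
  | some y, none => simp [Hbar, Matrix.one_apply]
  | some y, some y' =>
    simp only [Hbar, Matrix.of_apply, Matrix.one_apply]
    have h1 : ∑ z : Yb n, ((cst n : ℂ) * signDot y z) * ((cst n : ℂ) * signDot z y')
        = if y = y' then 1 else 0 := by
      have e : ∀ z : Yb n, ((cst n : ℂ) * signDot y z) * ((cst n : ℂ) * signDot z y')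
          = (cst n : ℂ) * (cst n : ℂ) * (signDot y z * signDot z y') := fun z => by ring
      simp only [e, ← Finset.mul_sum, char_sum]
      by_cases h : y = y'
      · simp only [h, if_true]
        simpa using cst_sq n
      · simp [h]
    rw [h1]
    simp [Option.some_inj]

def permM {I : Type*} [Fintype I] [DecidableEq I] (f : I → I) : Matrix I I ℂ :=
  Matrix.of fun p q => if p = f q then 1 else 0

lemma permM_mul {I : Type*} [Fintype I] [DecidableEq I] (f g : I → I) :
    permM f * permM g = permM (f ∘ g) := by
  ext p q
  rw [Matrix.mul_apply]
  rw [Finset.sum_eq_single (g q)]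
  · simp [permM]
  · intro r _ hr
    simp [permM, hr]
  · simp

lemma permM_id {I : Type*} [Fintype I] [DecidableEq I] : permM (id : I → I) = 1 := by
  ext p q
  simp [permM, Matrix.one_apply]

lemma swapBot_invol (n : ℕ) : (swapBot n) ∘ (swapBot n) = id := by
  funext a
  match a with
  | none => simp [swapBot]
  | some y =>
    by_cases h : y = (fun _ => false)
    · simp [swapBot, h]
    · simp [swapBot, h]

lemma Sswap_eq (n : ℕ) : Sswap n = permM (swapBot n) := rfl

lemma Sswap_sq (n : ℕ) : Sswap n * Sswap n = 1 := by
  rw [Sswap_eq, permM_mul, swapBot_invol, permM_id]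

lemma Fmat_sq (n : ℕ) : Fmat n * Fmat n = 1 := by
  rw [Fmat]
  have h1 : Hbar n * Sswap n * Hbar n * (Hbar n * Sswap n * Hbar n)
      = Hbar n * (Sswap n * ((Hbar n * Hbar n) * (Sswap n * Hbar n))) := by
    simp only [mul_assoc]
  rw [h1, Hbar_sq, one_mul, ← mul_assoc (Sswap n), Sswap_sq, one_mul, Hbar_sq]

abbrev Tr (n : ℕ) := Yb n × Yb n × Ybar n

def lift1 {n : ℕ} (M : Matrix (Yb n × Ybar n) (Yb n × Ybar n) ℂ) : Matrix (Tr n) (Tr n) ℂ :=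
  Matrix.of fun p q => if p.2.1 = q.2.1 then M (p.1, p.2.2) (q.1, q.2.2) else 0

def lift2 {n : ℕ} (M : Matrix (Yb n × Ybar n) (Yb n × Ybar n) ℂ) : Matrix (Tr n) (Tr n) ℂ :=
  Matrix.of fun p q => if p.1 = q.1 then M (p.2.1, p.2.2) (q.2.1, q.2.2) else 0

lemma lift1_mul {n : ℕ} (M N : Matrix (Yb n × Ybar n) (Yb n × Ybar n) ℂ) :
    lift1 M * lift1 N = lift1 (M * N) := by
  ext ⟨a, a', u⟩ ⟨b, b', w⟩
  rw [Matrix.mul_apply]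
  simp only [lift1, Matrix.of_apply, Matrix.mul_apply, Fintype.sum_prod_type,
    ite_mul, zero_mul, mul_ite, mul_zero]
  rw [Finset.sum_comm]
  simp [Finset.sum_ite_eq, Finset.sum_ite_eq']

lemma lift2_mul {n : ℕ} (M N : Matrix (Yb n × Ybar n) (Yb n × Ybar n) ℂ) :
    lift2 M * lift2 N = lift2 (M * N) := by
  ext ⟨a, a', u⟩ ⟨b, b', w⟩
  rw [Matrix.mul_apply]
  simp only [lift2, Matrix.of_apply, Matrix.mul_apply, Fintype.sum_prod_type,
    ite_mul, zero_mul, mul_ite, mul_zero]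
  simp [Finset.sum_ite_eq, Finset.sum_ite_eq']

lemma lift1_one {n : ℕ} : lift1 (1 : Matrix (Yb n × Ybar n) (Yb n × Ybar n) ℂ) = 1 := by
  ext ⟨a, a', u⟩ ⟨b, b', w⟩
  simp only [lift1, Matrix.of_apply, Matrix.one_apply, Prod.ext_iff]
  split_ifs <;> simp_all

lemma liftK_eq {n : ℕ} :
    lift1 ((1 : Matrix (Yb n) (Yb n) ℂ) ⊗ₖ Fmat n)
      = lift2 ((1 : Matrix (Yb n) (Yb n) ℂ) ⊗ₖ Fmat n) := by
  ext ⟨a, a', u⟩ ⟨b, b', w⟩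
  simp only [lift1, lift2, Matrix.of_apply, Matrix.kroneckerMap_apply, Matrix.one_apply]
  by_cases h1 : a = b <;> by_cases h2 : a' = b' <;> simp [h1, h2]

def g1fun (n : ℕ) : Tr n → Tr n :=
  fun p => ((cnotFun n (p.1, p.2.2)).1, p.2.1, p.2.2)

def g2fun (n : ℕ) : Tr n → Tr n :=
  fun p => (p.1, (cnotFun n (p.2.1, p.2.2)).1, p.2.2)

lemma cnotFun_snd (n : ℕ) (p : Yb n × Ybar n) : (cnotFun n p).2 = p.2 := by
  obtain ⟨b, v⟩ := p; cases v <;> rfl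

lemma lift1_cnot (n : ℕ) : lift1 (CNOTmat n) = permM (g1fun n) := by
  ext ⟨a, a', u⟩ ⟨b, b', w⟩
  simp only [lift1, CNOTmat, permM, Matrix.of_apply, g1fun]
  cases w <;> simp only [cnotFun, Prod.ext_iff] <;> split_ifs <;> simp_all

lemma lift2_cnot (n : ℕ) : lift2 (CNOTmat n) = permM (g2fun n) := by
  ext ⟨a, a', u⟩ ⟨b, b', w⟩
  simp only [lift2, CNOTmat, permM, Matrix.of_apply, g2fun]
  cases w <;> simp only [cnotFun, Prod.ext_iff] <;> split_ifs <;> simp_all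

lemma gfun_comm (n : ℕ) : (g1fun n) ∘ (g2fun n) = (g2fun n) ∘ (g1fun n) := by
  funext ⟨a, a', u⟩
  cases u <;> rfl

lemma Ksq {n : ℕ} :
    lift1 ((1 : Matrix (Yb n) (Yb n) ℂ) ⊗ₖ Fmat n) *
      lift1 ((1 : Matrix (Yb n) (Yb n) ℂ) ⊗ₖ Fmat n) = 1 := by
  rw [lift1_mul, ← Matrix.mul_kronecker_mul, Fmat_sq, Matrix.one_mul, Matrix.one_kronecker_one,
    lift1_one]

lemma smallComm (n : ℕ) :
    lift1 (Oxsmall n) * lift2 (Oxsmall n) = lift2 (Oxsmall n) * lift1 (Oxsmall n) := by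
  set K := lift1 ((1 : Matrix (Yb n) (Yb n) ℂ) ⊗ₖ Fmat n) with hK
  have h1 : lift1 (Oxsmall n) = K * permM (g1fun n) * K := by
    rw [Oxsmall, ← lift1_mul, ← lift1_mul, lift1_cnot]
  have h2 : lift2 (Oxsmall n) = K * permM (g2fun n) * K := by
    rw [Oxsmall, ← lift2_mul, ← lift2_mul, lift2_cnot, hK, liftK_eq]
  have hKK : K * K = 1 := Ksq
  have key : ∀ f g : Tr n → Tr n, f ∘ g = g ∘ f →
      (K * permM f * K) * (K * permM g * K) = (K * permM g * K) * (K * permM f * K) := by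
    intro f g hfg
    have e : ∀ f g : Tr n → Tr n,
        (K * permM f * K) * (K * permM g * K) = K * (permM f * (K * K) * permM g) * K := by
      intro f g; simp only [mul_assoc]
    rw [e, e, hKK, mul_one, mul_one, permM_mul, permM_mul, hfg]
  rw [h1, h2]
  exact key _ _ (gfun_comm n)

lemma key_reparam {n : ℕ} {X : Type*} [Fintype X] [DecidableEq X] (x : X)
    (A B : Ybar n → Ybar n → ℂ) (d e : Db n X) :
    ∑ f : Db n X, (if ∀ z, z ≠ x → d z = f z then A (d x) (f x) else 0) *
      (if ∀ z, z ≠ x → f z = e z then B (f x) (e x) else 0)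
    = if ∀ z, z ≠ x → d z = e z then ∑ v : Ybar n, A (d x) v * B v (e x) else 0 := by
  by_cases h : ∀ z, z ≠ x → d z = e z
  · rw [if_pos h]
    have step1 : ∑ f : Db n X, (if ∀ z, z ≠ x → d z = f z then A (d x) (f x) else 0) *
        (if ∀ z, z ≠ x → f z = e z then B (f x) (e x) else 0)
        = ∑ f ∈ Finset.univ.filter (fun f : Db n X => ∀ z, z ≠ x → d z = f z),
            (A (d x) (f x)) * (if ∀ z, z ≠ x → f z = e z then B (f x) (e x) else 0) := by
      rw [Finset.sum_filter]
      apply Finset.sum_congr rfl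
      intro f _
      split_ifs <;> simp
    rw [step1]
    apply Finset.sum_bij' (i := fun f _ => f x)
      (j := fun v _ => Function.update d x v)
    · intro f _
      exact Finset.mem_univ _
    · intro v _
      simp only [Finset.mem_filter, Finset.mem_univ, true_and]
      intro z hz
      rw [Function.update_of_ne hz]
    · intro f hf
      simp only [Finset.mem_filter, Finset.mem_univ, true_and] at hf
      funext z
      by_cases hz : z = x
      · subst hz; rw [Function.update_self]
      · rw [Function.update_of_ne hz, ← hf z hz]
    · intro v _
      rw [Function.update_self]
    · intro f hf
      simp only [Finset.mem_filter, Finset.mem_univ, true_and] at hf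
      have hQ : ∀ z, z ≠ x → f z = e z := by
        intro z hz; rw [← hf z hz]; exact h z hz
      rw [if_pos hQ]
  · rw [if_neg h]
    apply Finset.sum_eq_zero
    intro f _
    split_ifs with h1 h2
    · exact absurd (fun z hz => (h1 z hz).trans (h2 z hz)) h
    all_goals simp

lemma offdiag {n : ℕ} {X : Type*} [Fintype X] [DecidableEq X] {x x' : X} (hne : x ≠ x')
    (A B : Ybar n → Ybar n → ℂ) (d e : Db n X) :
    ∑ f : Db n X, (if ∀ z, z ≠ x → d z = f z then A (d x) (f x) else 0) *
      (if ∀ z, z ≠ x' → f z = e z then B (f x') (e x') else 0)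
    = if ∀ z, z ≠ x → z ≠ x' → d z = e z then A (d x) (e x) * B (d x') (e x') else 0 := by
  by_cases h : ∀ z, z ≠ x → z ≠ x' → d z = e z
  · rw [if_pos h]
    rw [Finset.sum_eq_single (Function.update d x (e x))]
    · have h1 : ∀ z, z ≠ x → d z = Function.update d x (e x) z := by
        intro z hz; rw [Function.update_of_ne hz]
      have h2 : ∀ z, z ≠ x' → Function.update d x (e x) z = e z := by
        intro z hz
        by_cases hzx : z = x
        · subst hzx; rw [Function.update_self]
        · rw [Function.update_of_ne hzx]; exact h z hzx hz
      rw [if_pos h1, if_pos h2, Function.update_self,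
        Function.update_of_ne (Ne.symm hne)]
    · intro f _ hf
      split_ifs with h1 h2
      · exfalso
        apply hf
        funext z
        by_cases hzx : z = x
        · rw [hzx, Function.update_self]
          exact h2 x hne
        · rw [Function.update_of_ne hzx, ← h1 z hzx]
      all_goals simp
    · intro hu; exact absurd (Finset.mem_univ _) hu
  · rw [if_neg h]
    apply Finset.sum_eq_zero
    intro f _
    split_ifs with h1 h2
    · exact absurd (fun z hz hz' => (h1 z hz).trans (h2 z hz')) h
    all_goals simp

abbrev Ur (n : ℕ) (X : Type*) := Yb n × Yb n × Db n X

def locU {n : ℕ} {X : Type*} [Fintype X] [DecidableEq X] (x : X)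
    (S : Matrix (Tr n) (Tr n) ℂ) : Matrix (Ur n X) (Ur n X) ℂ :=
  Matrix.of fun p q =>
    if ∀ z, z ≠ x → p.2.2 z = q.2.2 z then
      S (p.1, p.2.1, p.2.2 x) (q.1, q.2.1, q.2.2 x)
    else 0

lemma locU_mul {n : ℕ} {X : Type*} [Fintype X] [DecidableEq X] (x : X)
    (S T : Matrix (Tr n) (Tr n) ℂ) : locU x S * locU x T = locU x (S * T) := by
  ext ⟨a, a', d⟩ ⟨b, b', e⟩
  rw [Matrix.mul_apply]
  simp only [locU, Matrix.of_apply, Fintype.sum_prod_type]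
  have hre : ∀ c c' : Yb n, (∑ f : Db n X,
      (if ∀ z, z ≠ x → d z = f z then S (a, a', d x) (c, c', f x) else 0) *
      (if ∀ z, z ≠ x → f z = e z then T (c, c', f x) (b, b', e x) else 0))
      = if ∀ z, z ≠ x → d z = e z then
          ∑ v : Ybar n, S (a, a', d x) (c, c', v) * T (c, c', v) (b, b', e x) else 0 :=
    fun c c' => key_reparam x (fun u v => S (a, a', u) (c, c', v))
      (fun v w => T (c, c', v) (b, b', w)) d e
  simp only [hre]
  by_cases hc : ∀ z, z ≠ x → d z = e z <;>
    simp [hc, Matrix.mul_apply, Fintype.sum_prod_type]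

lemma collapseA {α β γ : Type*} [Fintype α] [Fintype β] [Fintype γ] [DecidableEq α] [DecidableEq β]
    (b : α) (a' : β) (F : α → γ → ℂ) (G : β → γ → ℂ) :
    ∑ c : α, ∑ c' : β, ∑ f : γ, (if a' = c' then F c f else 0) * (if c = b then G c' f else 0)
      = ∑ f : γ, F b f * G a' f := by
  simp only [ite_mul, mul_ite, zero_mul, mul_zero, Finset.sum_ite_irrel,
    Finset.sum_const_zero, Finset.sum_ite_eq, Finset.sum_ite_eq', Finset.mem_univ, if_true]

lemma collapseB {α β γ : Type*} [Fintype α] [Fintype β] [Fintype γ] [DecidableEq α] [DecidableEq β]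
    (a : α) (b' : β) (F : β → γ → ℂ) (G : α → γ → ℂ) :
    ∑ c : α, ∑ c' : β, ∑ f : γ, (if a = c then F c' f else 0) * (if c' = b' then G c f else 0)
      = ∑ f : γ, F b' f * G a f := by
  simp only [ite_mul, mul_ite, zero_mul, mul_zero, Finset.sum_ite_irrel,
    Finset.sum_const_zero, Finset.sum_ite_eq, Finset.sum_ite_eq', Finset.mem_univ, if_true]

lemma Acomm_ne {n : ℕ} {X : Type*} [Fintype X] [DecidableEq X] {x x' : X} (hne : x ≠ x')
    (M N : Matrix (Yb n × Ybar n) (Yb n × Ybar n) ℂ) :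
    locU x (lift1 M) * locU x' (lift2 N) = locU x' (lift2 N) * locU x (lift1 M) := by
  ext ⟨a, a', d⟩ ⟨b, b', e⟩
  rw [Matrix.mul_apply, Matrix.mul_apply]
  simp only [locU, lift1, lift2, Matrix.of_apply, Fintype.sum_prod_type]
  have lhs1 : ∀ c c' : Yb n, ∀ f : Db n X,
      (if ∀ z, z ≠ x → d z = f z then (if a' = c' then M (a, d x) (c, f x) else 0) else 0) *
      (if ∀ z, z ≠ x' → f z = e z then (if c = b then N (c', f x') (b', e x') else 0) else 0)
      = (if a' = c' then (if ∀ z, z ≠ x → d z = f z then M (a, d x) (c, f x) else 0) else 0) *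
        (if c = b then (if ∀ z, z ≠ x' → f z = e z then N (c', f x') (b', e x') else 0) else 0) := by
    intro c c' f; split_ifs <;> simp
  have rhs1 : ∀ c c' : Yb n, ∀ f : Db n X,
      (if ∀ z, z ≠ x' → d z = f z then (if a = c then N (a', d x') (c', f x') else 0) else 0) *
      (if ∀ z, z ≠ x → f z = e z then (if c' = b' then M (c, f x) (b, e x) else 0) else 0)
      = (if a = c then (if ∀ z, z ≠ x' → d z = f z then N (a', d x') (c', f x') else 0) else 0) *
        (if c' = b' then (if ∀ z, z ≠ x → f z = e z then M (c, f x) (b, e x) else 0) else 0) := by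
    intro c c' f; split_ifs <;> simp
  simp only [lhs1, rhs1]
  rw [collapseA b a' (fun (c : Yb n) (f : Db n X) => if ∀ z, z ≠ x → d z = f z then M (a, d x) (c, f x) else 0)
      (fun (c' : Yb n) (f : Db n X) => if ∀ z, z ≠ x' → f z = e z then N (c', f x') (b', e x') else 0),
    collapseB a b' (fun (c' : Yb n) (f : Db n X) => if ∀ z, z ≠ x' → d z = f z then N (a', d x') (c', f x') else 0)
      (fun (c : Yb n) (f : Db n X) => if ∀ z, z ≠ x → f z = e z then M (c, f x) (b, e x) else 0)]
  rw [offdiag hne (fun u v => M (a, u) (b, v)) (fun u v => N (a', u) (b', v)) d e,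
    offdiag hne.symm (fun u v => N (a', u) (b', v)) (fun u v => M (a, u) (b, v)) d e]
  by_cases hc : ∀ z, z ≠ x → z ≠ x' → d z = e z
  · have hc' : ∀ z, z ≠ x' → z ≠ x → d z = e z := fun z h1 h2 => hc z h2 h1
    rw [if_pos hc, if_pos hc', mul_comm]
  · have hc' : ¬ ∀ z, z ≠ x' → z ≠ x → d z = e z := fun hcc => hc fun z h1 h2 => hcc z h2 h1
    rw [if_neg hc, if_neg hc']

lemma Acomm {n : ℕ} {X : Type*} [Fintype X] [DecidableEq X] (x x' : X) :
    locU x (lift1 (Oxsmall n)) * locU x' (lift2 (Oxsmall n))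
      = locU x' (lift2 (Oxsmall n)) * locU (X := X) x (lift1 (Oxsmall n)) := by
  rcases eq_or_ne x x' with rfl | hne
  · rw [locU_mul, locU_mul, smallComm]
  · exact Acomm_ne hne _ _

-- database-level definitions (duplicated from the main file)

def locP {n : ℕ} {X : Type*} [Fintype X] [DecidableEq X] (x : X)
    (M : Matrix (Yb n × Ybar n) (Yb n × Ybar n) ℂ) : Matrix (Yb n × Db n X) (Yb n × Db n X) ℂ :=
  Matrix.of fun p q =>
    if ∀ z, z ≠ x → p.2 z = q.2 z then M (p.1, p.2 x) (q.1, q.2 x) else 0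

lemma locP_mul {n : ℕ} {X : Type*} [Fintype X] [DecidableEq X] (x : X)
    (M N : Matrix (Yb n × Ybar n) (Yb n × Ybar n) ℂ) :
    locP x M * locP x N = locP x (M * N) := by
  ext ⟨a, d⟩ ⟨b, e⟩
  rw [Matrix.mul_apply]
  simp only [locP, Matrix.of_apply, Fintype.sum_prod_type]
  have hre : ∀ c : Yb n, (∑ f : Db n X,
      (if ∀ z, z ≠ x → d z = f z then M (a, d x) (c, f x) else 0) *
      (if ∀ z, z ≠ x → f z = e z then N (c, f x) (b, e x) else 0))
      = if ∀ z, z ≠ x → d z = e z then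
          ∑ v : Ybar n, M (a, d x) (c, v) * N (c, v) (b, e x) else 0 :=
    fun c => key_reparam x (fun u v => M (a, u) (c, v)) (fun v w => N (c, v) (b, w)) d e
  simp only [hre]
  by_cases hc : ∀ z, z ≠ x → d z = e z <;>
    simp [hc, Matrix.mul_apply, Fintype.sum_prod_type]

lemma kron_FDx_eq {n : ℕ} {X : Type*} [Fintype X] [DecidableEq X] (x : X) :
    ((1 : Matrix (Yb n) (Yb n) ℂ) ⊗ₖ FDx n x)
      = locP x ((1 : Matrix (Yb n) (Yb n) ℂ) ⊗ₖ Fmat n) := by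
  ext ⟨a, d⟩ ⟨b, e⟩
  simp only [locP, FDx, onCoord, Matrix.of_apply, Matrix.kroneckerMap_apply]
  split_ifs <;> simp

def tY {n : ℕ} (v : Ybar n) (b : Yb n) : Yb n := Option.casesOn v b fun y => xorY b y

lemma cnotFun_eq (n : ℕ) (p : Yb n × Ybar n) : cnotFun n p = (tY p.2 p.1, p.2) := by
  obtain ⟨b, u⟩ := p; cases u <;> rfl

lemma cnotDFun_eq {n : ℕ} {X : Type*} (x : X) (p : Yb n × Db n X) :
    cnotDFun x p = (tY (p.2 x) p.1, p.2) := by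
  obtain ⟨b, e⟩ := p
  unfold cnotDFun tY
  dsimp only
  cases e x <;> rfl

lemma CNOTD_eq {n : ℕ} {X : Type*} [Fintype X] [DecidableEq X] (x : X) :
    CNOTD (n := n) x = locP x (CNOTmat n) := by
  ext ⟨a, d⟩ ⟨b, e⟩
  simp only [locP, CNOTD, CNOTmat, Matrix.of_apply, cnotDFun_eq, cnotFun_eq]
  simp only [Prod.mk.injEq]
  split_ifs with h1 h2 h3 h4 h5 <;> try rfl
  · exact absurd ⟨h1.1, by rw [h1.2]⟩ h3
  · exact absurd (fun z hz => by rw [h1.2]) h2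
  · refine absurd ⟨h5.1, funext fun z => ?_⟩ h1
    by_cases hz : z = x
    · subst hz; exact h5.2
    · exact h4 z hz

lemma OxD_eq {n : ℕ} {X : Type*} [Fintype X] [DecidableEq X] (x : X) :
    OxD n x = locP x (Oxsmall n) := by
  rw [OxD, kron_FDx_eq, CNOTD_eq, locP_mul, locP_mul, Oxsmall]

lemma entry12 {n : ℕ} {X : Type*} [Fintype X] [DecidableEq X] (x x' : X)
    (M N : Matrix (Yb n × Ybar n) (Yb n × Ybar n) ℂ)
    (a a' b b' : Yb n) (d e : Db n X) :
    (locU x (lift1 M) * locU x' (lift2 N)) ((a, a', d)) ((b, b', e))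
      = ∑ f : Db n X, locP x M (a, d) (b, f) * locP x' N (a', f) (b', e) := by
  rw [Matrix.mul_apply]
  simp only [locU, lift1, lift2, locP, Matrix.of_apply, Fintype.sum_prod_type]
  have lhs1 : ∀ c c' : Yb n, ∀ f : Db n X,
      (if ∀ z, z ≠ x → d z = f z then (if a' = c' then M (a, d x) (c, f x) else 0) else 0) *
      (if ∀ z, z ≠ x' → f z = e z then (if c = b then N (c', f x') (b', e x') else 0) else 0)
      = (if a' = c' then (if ∀ z, z ≠ x → d z = f z then M (a, d x) (c, f x) else 0) else 0) *
        (if c = b then (if ∀ z, z ≠ x' → f z = e z then N (c', f x') (b', e x') else 0) else 0) := by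
    intro c c' f; split_ifs <;> simp
  simp only [lhs1]
  rw [collapseA b a'
    (fun (c : Yb n) (f : Db n X) => if ∀ z, z ≠ x → d z = f z then M (a, d x) (c, f x) else 0)
    (fun (c' : Yb n) (f : Db n X) => if ∀ z, z ≠ x' → f z = e z then N (c', f x') (b', e x') else 0)]

lemma entry21 {n : ℕ} {X : Type*} [Fintype X] [DecidableEq X] (x x' : X)
    (M N : Matrix (Yb n × Ybar n) (Yb n × Ybar n) ℂ)
    (a a' b b' : Yb n) (d e : Db n X) :
    (locU x' (lift2 N) * locU x (lift1 M)) ((a, a', d)) ((b, b', e))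
      = ∑ f : Db n X, locP x' N (a', d) (b', f) * locP x M (a, f) (b, e) := by
  rw [Matrix.mul_apply]
  simp only [locU, lift1, lift2, locP, Matrix.of_apply, Fintype.sum_prod_type]
  have rhs1 : ∀ c c' : Yb n, ∀ f : Db n X,
      (if ∀ z, z ≠ x' → d z = f z then (if a = c then N (a', d x') (c', f x') else 0) else 0) *
      (if ∀ z, z ≠ x → f z = e z then (if c' = b' then M (c, f x) (b, e x) else 0) else 0)
      = (if a = c then (if ∀ z, z ≠ x' → d z = f z then N (a', d x') (c', f x') else 0) else 0) *
        (if c' = b' then (if ∀ z, z ≠ x → f z = e z then M (c, f x) (b, e x) else 0) else 0) := by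
    intro c c' f; split_ifs <;> simp
  simp only [rhs1]
  rw [collapseB a b'
    (fun (c' : Yb n) (f : Db n X) => if ∀ z, z ≠ x' → d z = f z then N (a', d x') (c', f x') else 0)
    (fun (c : Yb n) (f : Db n X) => if ∀ z, z ≠ x → f z = e z then M (c, f x) (b, e x) else 0)]

lemma KEY {n : ℕ} {X : Type*} [Fintype X] [DecidableEq X] (x x' : X)
    (a a' b b' : Yb n) (d e : Db n X) :
    ∑ f : Db n X, OxD n x (a, d) (b, f) * OxD n x' (a', f) (b', e)
      = ∑ f : Db n X, OxD n x' (a', d) (b', f) * OxD n x (a, f) (b, e) := by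
  simp only [OxD_eq]
  rw [← entry12 x x' (Oxsmall n) (Oxsmall n) a a' b b' d e,
    ← entry21 x x' (Oxsmall n) (Oxsmall n) a a' b b' d e, Acomm]

lemma Oquery1_apply {n : ℕ} {X : Type*} [Fintype X] [DecidableEq X]
    (p q : X × Yb n × X × Yb n × Db n X) :
    Oquery1 n X p q = if p.1 = q.1 ∧ p.2.2.1 = q.2.2.1 ∧ p.2.2.2.1 = q.2.2.2.1 then
      OxD n p.1 (p.2.1, p.2.2.2.2) (q.2.1, q.2.2.2.2) else 0 := by
  simp only [Oquery1, OXYD, Matrix.of_apply]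
  split_ifs <;> first | rfl | tauto

lemma Oquery2_apply {n : ℕ} {X : Type*} [Fintype X] [DecidableEq X]
    (p q : X × Yb n × X × Yb n × Db n X) :
    Oquery2 n X p q = if p.1 = q.1 ∧ p.2.1 = q.2.1 ∧ p.2.2.1 = q.2.2.1 then
      OxD n p.2.2.1 (p.2.2.2.1, p.2.2.2.2) (q.2.2.2.1, q.2.2.2.2) else 0 := by
  simp only [Oquery2, OXYD, Matrix.of_apply]
  split_ifs <;> first | rfl | tauto

set_option maxHeartbeats 1000000 in

lemma collapseL {α β γ : Type*} [Fintype α] [Fintype β] [Fintype γ]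
    [DecidableEq α] [DecidableEq β]
    (x1 x1' x2 x2' : α) (y2 y1' : β) (A : β → γ → ℂ) (B : α → β → γ → ℂ) :
    (∑ u1 : α, ∑ v1 : β, ∑ u2 : α, ∑ v2 : β, ∑ f : γ,
      (if x1 = u1 ∧ x2 = u2 ∧ y2 = v2 then A v1 f else 0) *
      (if u1 = x1' ∧ v1 = y1' ∧ u2 = x2' then B u2 v2 f else 0))
    = if x1 = x1' ∧ x2 = x2' then ∑ f : γ, A y1' f * B x2 y2 f else 0 := by
  simp only [ite_and, ite_mul, mul_ite, zero_mul, mul_zero, Finset.sum_ite_irrel,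
    Finset.sum_const_zero, Finset.sum_ite_eq, Finset.sum_ite_eq', Finset.mem_univ, if_true]
  split_ifs <;> first | (subst_vars; rfl) | tauto

set_option maxHeartbeats 1000000 in

lemma collapseR {α β γ : Type*} [Fintype α] [Fintype β] [Fintype γ]
    [DecidableEq α] [DecidableEq β]
    (x1 x1' x2 x2' : α) (y1 y2' : β) (A : β → γ → ℂ) (B : α → β → γ → ℂ) :
    (∑ u1 : α, ∑ v1 : β, ∑ u2 : α, ∑ v2 : β, ∑ f : γ,
      (if x1 = u1 ∧ y1 = v1 ∧ x2 = u2 then A v2 f else 0) *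
      (if u1 = x1' ∧ u2 = x2' ∧ v2 = y2' then B u1 v1 f else 0))
    = if x1 = x1' ∧ x2 = x2' then ∑ f : γ, A y2' f * B x1 y1 f else 0 := by
  simp only [ite_and, ite_mul, mul_ite, zero_mul, mul_zero, Finset.sum_ite_irrel,
    Finset.sum_const_zero, Finset.sum_ite_eq, Finset.sum_ite_eq', Finset.mem_univ, if_true]
  split_ifs <;> first | (subst_vars; rfl) | tauto

-- STATEMENT 15
theorem stmt15 (n : ℕ) (X : Type*) [Fintype X] [DecidableEq X] [Nonempty X] :
    commM (Oquery1 n X) (Oquery2 n X) = 0 := by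
  rw [commM, sub_eq_zero]
  ext ⟨x1, y1, x2, y2, d⟩ ⟨x1', y1', x2', y2', e⟩
  rw [Matrix.mul_apply, Matrix.mul_apply]
  simp only [Oquery1_apply, Oquery2_apply, Fintype.sum_prod_type]
  rw [collapseL x1 x1' x2 x2' y2 y1'
      (fun (v1 : Yb n) (f : Db n X) => OxD n x1 (y1, d) (v1, f))
      (fun (u2 : X) (v2 : Yb n) (f : Db n X) => OxD n u2 (v2, f) (y2', e)),
    collapseR x1 x1' x2 x2' y1 y2'
      (fun (v2 : Yb n) (f : Db n X) => OxD n x2 (y2, d) (v2, f))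
      (fun (u1 : X) (v1 : Yb n) (f : Db n X) => OxD n u1 (v1, f) (y1', e))]
  split_ifs with h
  · exact KEY x1 x2 y1 y2 y1' y2' d e
  · rfl

end
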